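/- Let τ > 0, η > 0 and consider, for small ζ ∈ ℂ, the quartic τλ⁴ + (1−τζ²)λ³ + (τη²ζ² − τ − 1)ζ²λ² + ((η²+τ)ζ²−1)ζ²λ + ζ⁴ (the Fourier-coupled characteristic polynomial with β = τ). Its roots admit the expansions λ_{1,2}(ζ) = ±ζ ∓ (η²/2)ζ³ − (η²/2)ζ⁴ + O(ζ⁵), λ₃(ζ) = ζ² + O(ζ³), λ₄(ζ) = −1/τ + O(ζ²). Hence with ζ = i|ξ|, Re λ_{1,2}(ξ) = −(η²/2)|ξ|⁴ + O(|ξ|⁵), Re λ₃(ξ) = −|ξ|² + O(|ξ|³), Re λ₄(ξ) = −1/τ + O(|ξ|²), all negative for small |ξ| ≠ 0. -/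

import Mathlib

lemma quad_factor (b c : ℂ) : ∃ u v : ℂ, ∀ z : ℂ, z^2 + b*z + c = (z-u)*(z-v) := by
  obtain ⟨s, hs⟩ := IsAlgClosed.exists_pow_nat_eq (k := ℂ) (b^2 - 4*c) (n := 2) (by norm_num)
  exact ⟨(-b+s)/2, (-b-s)/2, fun z => by linear_combination (1/4 : ℂ) * hs⟩

lemma cubic_factor (p q r : ℂ) : ∃ a b c : ℂ, ∀ z : ℂ, z^3 + p*z^2 + q*z + r = (z-a)*(z-b)*(z-c) := by
  have hdeg : (Polynomial.X^3 + Polynomial.C p * Polynomial.X^2 + Polynomial.C q * Polynomial.X + Polynomial.C r).degree = 3 := by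
    compute_degree!
  obtain ⟨a, ha⟩ := Complex.exists_root (f := Polynomial.X^3 + Polynomial.C p * Polynomial.X^2 + Polynomial.C q * Polynomial.X + Polynomial.C r) (by rw [hdeg]; norm_num)
  have ha' : a^3 + p*a^2 + q*a + r = 0 := by
    simpa [Polynomial.IsRoot] using ha
  obtain ⟨u, v, huv⟩ := quad_factor (p + a) (q + a*(p+a))
  refine ⟨a, u, v, fun z => ?_⟩
  linear_combination (z - a) * huv z + ha'

lemma three_distinct_prod {a b c r₁ r₂ r₃ : ℂ} (h1 : r₁ = a ∨ r₁ = b ∨ r₁ = c)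
    (h2 : r₂ = a ∨ r₂ = b ∨ r₂ = c) (h3 : r₃ = a ∨ r₃ = b ∨ r₃ = c)
    (h12 : r₁ ≠ r₂) (h13 : r₁ ≠ r₃) (h23 : r₂ ≠ r₃) :
    ∀ z : ℂ, (z-r₁)*(z-r₂)*(z-r₃) = (z-a)*(z-b)*(z-c) := by
  rcases h1 with rfl|rfl|rfl <;> rcases h2 with rfl|rfl|rfl <;> rcases h3 with rfl|rfl|rfl <;>
    intro z <;>
    first
      | exact absurd rfl h12 | exact absurd rfl h13 | exact absurd rfl h23
      | ring

noncomputable def Qf (η : ℝ) (z ζ : ℂ) : ℂ := (z - ζ^2)*(z - ζ)*(z + ζ) + (η:ℂ)^2*ζ^4*z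

set_option maxHeartbeats 1600000 in
lemma key (η : ℝ) (hη : 0 < η) (C : ℝ) (hC1 : 2*(η^2+3*η^4) ≤ C) (hC2 : 4*η^2 ≤ C)
    (ζ : ℂ) (hζ1 : ‖ζ‖ ≤ 1/32) (hζ2 : η * ‖ζ‖ ≤ 1/32) :
    (∃ a, Qf η a ζ = 0 ∧ ‖a - (ζ - ((η^2/2:ℝ):ℂ)*ζ^3 - ((η^2/2:ℝ):ℂ)*ζ^4)‖ ≤ C*‖ζ‖^5) ∧
    (∃ a, Qf η a ζ = 0 ∧ ‖a - ζ^2‖ ≤ C*‖ζ‖^3) := by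
  have nη : ‖(η:ℂ)‖ = η := by
    simp [Complex.norm_real, Real.norm_eq_abs, abs_of_pos hη]
  by_cases hz : ζ = 0
  · subst hz
    refine ⟨⟨0, by simp [Qf], by simp⟩, ⟨0, by simp [Qf], by simp⟩⟩
  set s := ‖ζ‖ with hsdef
  have hs0 : 0 < s := norm_pos_iff.mpr hz
  have hηs : η^2 * s^2 ≤ 1/1024 := by nlinarith [mul_nonneg hη.le hs0.le]
  have hs1 : s^2 ≤ s/32 := by nlinarith
  have hp43 : s^4 ≤ s^3 := by nlinarith [pow_nonneg hs0.le 3]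
  have hp87 : s^8 ≤ s^7 := by nlinarith [pow_nonneg hs0.le 7]
  have hkey5 : η^2*s^5 ≤ s^3/1024 := by
    have h1 : η^2*s^5 = (η^2*s^2)*s^3 := by ring
    rw [h1]
    calc (η^2*s^2)*s^3 ≤ (1/1024)*s^3 :=
          mul_le_mul_of_nonneg_right hηs (by positivity)
      _ = s^3/1024 := by ring
  have hkey6 : η^2*s^6 ≤ s^3/1024 := by
    have h1 : η^2*s^6 = (η^2*s^5)*s := by ring
    rw [h1]
    have h2 : (η^2*s^5)*s ≤ (s^3/1024)*1 := by
      apply mul_le_mul hkey5 (by linarith) hs0.le (by positivity)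
    linarith
  obtain ⟨a, b, c, hfac⟩ := cubic_factor (-ζ^2) (((η:ℂ)^2*ζ^2-1)*ζ^2) (ζ^4)
  have hQ : ∀ z, Qf η z ζ = (z-a)*(z-b)*(z-c) := fun z => by
    simp only [Qf]; linear_combination hfac z
  have nprod : ∀ z : ℂ, ‖z-a‖*‖z-b‖*‖z-c‖ = ‖Qf η z ζ‖ := fun z => by
    rw [hQ z, norm_mul, norm_mul]
  have hval1 : ‖Qf η ζ ζ‖ = η^2*s^5 := by
    have h : Qf η ζ ζ = (η:ℂ)^2*ζ^5 := by simp only [Qf]; ring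
    rw [h, norm_mul, norm_pow, norm_pow, nη]
  have hval2 : ‖Qf η (-ζ) ζ‖ = η^2*s^5 := by
    have h : Qf η (-ζ) ζ = -((η:ℂ)^2*ζ^5) := by simp only [Qf]; ring
    rw [h, norm_neg, norm_mul, norm_pow, norm_pow, nη]
  have hval3 : ‖Qf η (ζ^2) ζ‖ = η^2*s^6 := by
    have h : Qf η (ζ^2) ζ = (η:ℂ)^2*ζ^6 := by simp only [Qf]; ring
    rw [h, norm_mul, norm_pow, norm_pow, nη]
  have near : ∀ w : ℂ, ‖Qf η w ζ‖ < (s/8)^3 → ∃ r, (r=a∨r=b∨r=c) ∧ ‖w - r‖ ≤ s/8 := by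
    intro w hw
    by_contra hcon
    push_neg at hcon
    have ha' : s/8 < ‖w-a‖ := hcon a (Or.inl rfl)
    have hb' : s/8 < ‖w-b‖ := hcon b (Or.inr (Or.inl rfl))
    have hc' : s/8 < ‖w-c‖ := hcon c (Or.inr (Or.inr rfl))
    have hp := nprod w
    have q1 : (s/8)*(s/8) ≤ ‖w-a‖*‖w-b‖ :=
      mul_le_mul ha'.le hb'.le (by positivity) (norm_nonneg _)
    have q0 : (0:ℝ) < ‖w-a‖*‖w-b‖ :=
      mul_pos (lt_of_le_of_lt (by positivity) ha') (lt_of_le_of_lt (by positivity) hb')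
    have q2 : (s/8)*(s/8)*(s/8) < (‖w-a‖*‖w-b‖)*‖w-c‖ :=
      mul_lt_mul' q1 hc' (by positivity) q0
    have q3 : (s/8)^3 = (s/8)*(s/8)*(s/8) := by ring
    linarith [q2, hp.le, hw.le, hp.ge]
  have hcube : (s/8)^3 = s^3/512 := by ring
  obtain ⟨r₁, hr₁m, hr₁⟩ := near ζ (by
    rw [hval1, hcube]; nlinarith [pow_pos hs0 3])
  obtain ⟨r₂, hr₂m, hr₂⟩ := near (-ζ) (by
    rw [hval2, hcube]; nlinarith [pow_pos hs0 3])
  obtain ⟨r₃, hr₃m, hr₃⟩ := near (ζ^2) (by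
    rw [hval3, hcube]; nlinarith [pow_pos hs0 3])
  have d12 : r₁ ≠ r₂ := by
    intro h; subst h
    have e : (2:ℂ)*ζ = (ζ - r₁) - (-ζ - r₁) := by ring
    have h2 : ‖(2:ℂ)*ζ‖ ≤ ‖ζ-r₁‖ + ‖-ζ-r₁‖ := by rw [e]; exact norm_sub_le _ _
    rw [norm_mul] at h2
    simp only [Complex.norm_ofNat] at h2
    linarith
  have d13 : r₁ ≠ r₃ := by
    intro h; subst h
    have e : ζ - ζ^2 = (ζ - r₁) - (ζ^2 - r₁) := by ring
    have h2 : ‖ζ - ζ^2‖ ≤ ‖ζ-r₁‖ + ‖ζ^2-r₁‖ := by rw [e]; exact norm_sub_le _ _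
    have h3 : s - s^2 ≤ ‖ζ - ζ^2‖ := by
      have := norm_sub_norm_le ζ (ζ^2)
      rw [norm_pow] at this; linarith
    linarith
  have d23 : r₂ ≠ r₃ := by
    intro h; subst h
    have e : -ζ - ζ^2 = (-ζ - r₂) - (ζ^2 - r₂) := by ring
    have h2 : ‖-ζ - ζ^2‖ ≤ ‖-ζ-r₂‖ + ‖ζ^2-r₂‖ := by rw [e]; exact norm_sub_le _ _
    have h3 : s - s^2 ≤ ‖-ζ - ζ^2‖ := by
      have := norm_sub_norm_le (-ζ) (ζ^2)
      rw [norm_pow, norm_neg] at this; linarith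
    linarith
  have hQ' : ∀ z, Qf η z ζ = (z-r₁)*(z-r₂)*(z-r₃) := fun z => by
    rw [hQ z, ← three_distinct_prod hr₁m hr₂m hr₃m d12 d13 d23 z]
  have nprod' : ∀ z : ℂ, ‖z-r₁‖*‖z-r₂‖*‖z-r₃‖ = ‖Qf η z ζ‖ := fun z => by
    rw [hQ' z, norm_mul, norm_mul]
  have hroot1 : Qf η r₁ ζ = 0 := by rw [hQ' r₁]; ring
  have hroot3 : Qf η r₃ ζ = 0 := by rw [hQ' r₃]; ring
  constructor
  · -- root near ζ, refined
    set w := ζ - ((η^2/2:ℝ):ℂ)*ζ^3 - ((η^2/2:ℝ):ℂ)*ζ^4 with hwdef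
    clear_value w
    have hKc : ((η^2/2:ℝ):ℂ) = (η:ℂ)^2/2 := by push_cast; ring
    have hζw : ζ - w = (η:ℂ)^2/2*ζ^3 + (η:ℂ)^2/2*ζ^4 := by rw [hwdef, hKc]; ring
    have hnh : ‖ζ - w‖ ≤ η^2 * s^3 := by
      rw [hζw]
      have t1 : ‖(η:ℂ)^2/2*ζ^3‖ = η^2/2*s^3 := by
        rw [norm_mul, norm_div, norm_pow, norm_pow, nη, Complex.norm_ofNat]
      have t2 : ‖(η:ℂ)^2/2*ζ^4‖ = η^2/2*s^4 := by
        rw [norm_mul, norm_div, norm_pow, norm_pow, nη, Complex.norm_ofNat]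
      have := norm_add_le ((η:ℂ)^2/2*ζ^3) ((η:ℂ)^2/2*ζ^4)
      rw [t1, t2] at this
      have h5 : η^2/2*s^4 ≤ η^2/2*s^3 :=
        mul_le_mul_of_nonneg_left hp43 (by positivity)
      linarith
    have hnh' : ‖ζ - w‖ ≤ s/1024 := by
      have h1 : η^2*s^2*s ≤ 1/1024*s := mul_le_mul_of_nonneg_right hηs hs0.le
      have h2 : η^2*s^3 = η^2*s^2*s := by ring
      linarith [hnh, h1]
    have hid : Qf η w ζ = (η:ℂ)^2*ζ^7 + (η:ℂ)^2*ζ^5*(ζ-w) + (ζ-ζ^2-(ζ-w))*(ζ-w)^2 := by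
      rw [hwdef]; simp only [Qf, hKc]; ring
    have hQw : ‖Qf η w ζ‖ ≤ (η^2+3*η^4)*s^7 := by
      rw [hid]
      have t1 : ‖(η:ℂ)^2*ζ^7‖ = η^2*s^7 := by rw [norm_mul, norm_pow, norm_pow, nη]
      have t2 : ‖(η:ℂ)^2*ζ^5*(ζ-w)‖ ≤ η^2*s^5*(η^2*s^3) := by
        rw [norm_mul, norm_mul, norm_pow, norm_pow, nη]
        have : (0:ℝ) ≤ η^2*s^5 := by positivity
        exact mul_le_mul_of_nonneg_left hnh this
      have t3 : ‖(ζ-ζ^2-(ζ-w))*(ζ-w)^2‖ ≤ (2*s)*(η^2*s^3)^2 := by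
        rw [norm_mul, norm_pow]
        have u1 : ‖ζ-ζ^2-(ζ-w)‖ ≤ 2*s := by
          have v1 := norm_sub_le (ζ-ζ^2) (ζ-w)
          have v2 := norm_sub_le ζ (ζ^2)
          rw [norm_pow] at v2
          linarith [v1, v2, hnh', hs1, hs0]
        have u2 : ‖ζ-w‖^2 ≤ (η^2*s^3)^2 :=
          pow_le_pow_left₀ (norm_nonneg _) hnh 2
        exact mul_le_mul u1 u2 (by positivity) (by linarith [hs0])
      have tri := norm_add₃_le (a := (η:ℂ)^2*ζ^7) (b := (η:ℂ)^2*ζ^5*(ζ-w)) (c := (ζ-ζ^2-(ζ-w))*(ζ-w)^2)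
      rw [t1] at tri
      have b2 : η^2*s^5*(η^2*s^3) = η^4*s^8 := by ring
      have b3 : (2*s)*(η^2*s^3)^2 = 2*η^4*s^7 := by ring
      rw [b2] at t2; rw [b3] at t3
      have b4 : η^4*s^8 ≤ η^4*s^7 :=
        mul_le_mul_of_nonneg_left hp87 (by positivity)
      linarith [t2, t3, tri, b4]
    have lb2 : s ≤ ‖w - r₂‖ := by
      have e : (2:ℂ)*ζ = (w - r₂) - (w - ζ) - (-ζ - r₂) := by ring
      have h2 : ‖(2:ℂ)*ζ‖ ≤ ‖(w - r₂) - (w-ζ)‖ + ‖-ζ - r₂‖ := by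
        rw [e]; exact norm_sub_le _ _
      have h3 : ‖(w - r₂) - (w-ζ)‖ ≤ ‖w-r₂‖ + ‖w-ζ‖ := norm_sub_le _ _
      have h4 : ‖w - ζ‖ = ‖ζ - w‖ := norm_sub_rev _ _
      rw [norm_mul] at h2
      simp only [Complex.norm_ofNat] at h2
      linarith
    have lb3 : s/2 ≤ ‖w - r₃‖ := by
      have e : ζ - ζ^2 = (w - r₃) - (w - ζ) - (ζ^2 - r₃) := by ring
      have h2 : ‖ζ - ζ^2‖ ≤ ‖(w - r₃) - (w-ζ)‖ + ‖ζ^2 - r₃‖ := by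
        rw [e]; exact norm_sub_le _ _
      have h3 : ‖(w - r₃) - (w-ζ)‖ ≤ ‖w-r₃‖ + ‖w-ζ‖ := norm_sub_le _ _
      have h4 : ‖w - ζ‖ = ‖ζ - w‖ := norm_sub_rev _ _
      have h5 : s - s^2 ≤ ‖ζ - ζ^2‖ := by
        have := norm_sub_norm_le ζ (ζ^2)
        rw [norm_pow] at this; linarith
      linarith
    have hprod := nprod' w
    have hfin : ‖w - r₁‖ ≤ 2*(η^2+3*η^4)*s^5 := by
      have e1 : ‖w-r₁‖*s ≤ ‖w-r₁‖*‖w-r₂‖ := mul_le_mul_of_nonneg_left lb2 (norm_nonneg _)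
      have e2 : ‖w-r₁‖*s*(s/2) ≤ (‖w-r₁‖*‖w-r₂‖)*‖w-r₃‖ :=
        mul_le_mul e1 lb3 (by positivity) (by positivity)
      have chain : ‖w-r₁‖*s*(s/2) ≤ (η^2+3*η^4)*s^7 := by
        rw [hprod] at e2; linarith [e2, hQw]
      have e3 : ‖w-r₁‖*s*(s/2) = ‖w-r₁‖*(s^2/2) := by ring
      have e4 : (η^2+3*η^4)*s^7 = (2*(η^2+3*η^4)*s^5)*(s^2/2) := by ring
      rw [e3, e4] at chain
      exact le_of_mul_le_mul_right chain (by positivity)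
    refine ⟨r₁, hroot1, ?_⟩
    rw [norm_sub_rev]
    have hC5 : 2*(η^2+3*η^4)*s^5 ≤ C*s^5 :=
      mul_le_mul_of_nonneg_right hC1 (by positivity)
    linarith
  · -- root near ζ²
    have lb1 : s/2 ≤ ‖ζ^2 - r₁‖ := by
      have e : ζ - ζ^2 = (ζ - r₁) - (ζ^2 - r₁) := by ring
      have h2 : ‖ζ - ζ^2‖ ≤ ‖ζ-r₁‖ + ‖ζ^2-r₁‖ := by rw [e]; exact norm_sub_le _ _
      have h3 : s - s^2 ≤ ‖ζ - ζ^2‖ := by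
        have := norm_sub_norm_le ζ (ζ^2)
        rw [norm_pow] at this; linarith
      linarith
    have lb2 : s/2 ≤ ‖ζ^2 - r₂‖ := by
      have e : ζ + ζ^2 = (ζ^2 - r₂) - (-ζ - r₂) := by ring
      have h2 : ‖ζ + ζ^2‖ ≤ ‖ζ^2-r₂‖ + ‖-ζ-r₂‖ := by rw [e]; exact norm_sub_le _ _
      have h3 : s - s^2 ≤ ‖ζ + ζ^2‖ := by
        have h4 := norm_sub_norm_le ζ (-ζ^2)
        have e2 : ζ - -ζ^2 = ζ + ζ^2 := by ring
        rw [e2, norm_neg, norm_pow] at h4; linarith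
      linarith
    have hprod := nprod' (ζ^2)
    rw [hval3] at hprod
    have hfin : ‖ζ^2 - r₃‖ ≤ 4*η^2*s^4 := by
      have e1 : (s/2)*(s/2)*‖ζ^2-r₃‖ ≤ (‖ζ^2-r₁‖*‖ζ^2-r₂‖)*‖ζ^2-r₃‖ := by
        have := mul_le_mul lb1 lb2 (by positivity) (norm_nonneg _)
        exact mul_le_mul_of_nonneg_right this (norm_nonneg _)
      have chain : (s/2)*(s/2)*‖ζ^2-r₃‖ ≤ η^2*s^6 := by
        rw [hprod] at e1; linarith
      have e3 : (s/2)*(s/2)*‖ζ^2-r₃‖ = ‖ζ^2-r₃‖*(s^2/4) := by ring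
      have e4 : η^2*s^6 = (4*η^2*s^4)*(s^2/4) := by ring
      rw [e3, e4] at chain
      exact le_of_mul_le_mul_right chain (by positivity)
    refine ⟨r₃, hroot3, ?_⟩
    rw [norm_sub_rev]
    have h4 : 4*η^2*s^4 ≤ 4*η^2*s^3 :=
      mul_le_mul_of_nonneg_left hp43 (by positivity)
    have hC3 : 4*η^2*s^3 ≤ C*s^3 := mul_le_mul_of_nonneg_right hC2 (by positivity)
    linarith

set_option maxHeartbeats 1600000 in
open Complex in
theorem stmt_18 (τ η : ℝ) (hτ : 0 < τ) (hη : 0 < η) :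
    let P : ℂ → ℂ → ℂ := fun z ζ =>
      (τ : ℂ) * z ^ 4 + (1 - τ * ζ ^ 2) * z ^ 3
        + ((τ : ℂ) * η ^ 2 * ζ ^ 2 - τ - 1) * ζ ^ 2 * z ^ 2
        + (((η : ℂ) ^ 2 + τ) * ζ ^ 2 - 1) * ζ ^ 2 * z + ζ ^ 4
    ∃ δ > (0 : ℝ), ∃ C > (0 : ℝ), ∃ l₁ l₂ l₃ l₄ : ℂ → ℂ,
      (∀ ζ : ℂ, ‖ζ‖ ≤ δ →
        (P (l₁ ζ) ζ = 0 ∧ P (l₂ ζ) ζ = 0 ∧ P (l₃ ζ) ζ = 0 ∧ P (l₄ ζ) ζ = 0) ∧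
        ‖l₁ ζ - (ζ - ((η ^ 2 / 2 : ℝ) : ℂ) * ζ ^ 3 - ((η ^ 2 / 2 : ℝ) : ℂ) * ζ ^ 4)‖
          ≤ C * ‖ζ‖ ^ 5 ∧
        ‖l₂ ζ - (-ζ + ((η ^ 2 / 2 : ℝ) : ℂ) * ζ ^ 3 - ((η ^ 2 / 2 : ℝ) : ℂ) * ζ ^ 4)‖
          ≤ C * ‖ζ‖ ^ 5 ∧
        ‖l₃ ζ - ζ ^ 2‖ ≤ C * ‖ζ‖ ^ 3 ∧
        ‖l₄ ζ - (-(1 / τ) : ℂ)‖ ≤ C * ‖ζ‖ ^ 2) ∧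
      (∀ x : ℝ, |x| ≤ δ →
        |(l₁ (I * x)).re + η ^ 2 / 2 * x ^ 4| ≤ C * |x| ^ 5 ∧
        |(l₂ (I * x)).re + η ^ 2 / 2 * x ^ 4| ≤ C * |x| ^ 5 ∧
        |(l₃ (I * x)).re + x ^ 2| ≤ C * |x| ^ 3 ∧
        |(l₄ (I * x)).re + 1 / τ| ≤ C * x ^ 2) ∧
      (∃ δ' > (0 : ℝ), ∀ x : ℝ, 0 < |x| → |x| ≤ δ' →
        (l₁ (I * x)).re < 0 ∧ (l₂ (I * x)).re < 0 ∧
        (l₃ (I * x)).re < 0 ∧ (l₄ (I * x)).re < 0) := by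
  intro P
  have hPdef : P = fun z ζ =>
      (τ : ℂ) * z ^ 4 + (1 - τ * ζ ^ 2) * z ^ 3
        + ((τ : ℂ) * η ^ 2 * ζ ^ 2 - τ - 1) * ζ ^ 2 * z ^ 2
        + (((η : ℂ) ^ 2 + τ) * ζ ^ 2 - 1) * ζ ^ 2 * z + ζ ^ 4 := rfl
  classical
  set δ : ℝ := min (1/32) (1/(32*η)) with hδdef
  have hδ0 : 0 < δ := lt_min (by norm_num) (by positivity)
  set C : ℝ := 2*(η^2+3*η^4)+4*η^2+1 with hCdef
  have hC0 : 0 < C := by positivity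
  have hC1 : 2*(η^2+3*η^4) ≤ C := by nlinarith [sq_nonneg η]
  have hC2 : 4*η^2 ≤ C := by nlinarith [sq_nonneg η, pow_nonneg hη.le 4]
  have hδζ : ∀ ζ : ℂ, ‖ζ‖ ≤ δ → ‖ζ‖ ≤ 1/32 ∧ η*‖ζ‖ ≤ 1/32 := by
    intro ζ h
    refine ⟨h.trans (min_le_left _ _), ?_⟩
    have h2 : ‖ζ‖ ≤ 1/(32*η) := h.trans (min_le_right _ _)
    have h3 : η*‖ζ‖ ≤ η*(1/(32*η)) := mul_le_mul_of_nonneg_left h2 hη.le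
    have h4 : η*(1/(32*η)) = 1/32 := by field_simp
    linarith
  set l₁ : ℂ → ℂ := fun ζ =>
    if h : ∃ a, Qf η a ζ = 0 ∧
        ‖a - (ζ - ((η^2/2:ℝ):ℂ)*ζ^3 - ((η^2/2:ℝ):ℂ)*ζ^4)‖ ≤ C*‖ζ‖^5 then h.choose else 0
    with hl1def
  set l₃ : ℂ → ℂ := fun ζ =>
    if h : ∃ a, Qf η a ζ = 0 ∧ ‖a - ζ^2‖ ≤ C*‖ζ‖^3 then h.choose else 0 with hl3def
  have hl1 : ∀ ζ : ℂ, ‖ζ‖ ≤ δ → Qf η (l₁ ζ) ζ = 0 ∧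
      ‖l₁ ζ - (ζ - ((η^2/2:ℝ):ℂ)*ζ^3 - ((η^2/2:ℝ):ℂ)*ζ^4)‖ ≤ C*‖ζ‖^5 := by
    intro ζ h
    obtain ⟨h1, h2⟩ := hδζ ζ h
    have hex := (key η hη C hC1 hC2 ζ h1 h2).1
    rw [hl1def]
    simp only
    rw [dif_pos hex]
    exact hex.choose_spec
  have hl3 : ∀ ζ : ℂ, ‖ζ‖ ≤ δ → Qf η (l₃ ζ) ζ = 0 ∧ ‖l₃ ζ - ζ^2‖ ≤ C*‖ζ‖^3 := by
    intro ζ h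
    obtain ⟨h1, h2⟩ := hδζ ζ h
    have hex := (key η hη C hC1 hC2 ζ h1 h2).2
    rw [hl3def]
    simp only
    rw [dif_pos hex]
    exact hex.choose_spec
  have hPQ : ∀ z ζ : ℂ, P z ζ = ((τ:ℂ)*z+1) * Qf η z ζ := by
    intro z ζ; rw [hPdef]; simp only [Qf]; push_cast; ring
  have hQeven : ∀ z ζ : ℂ, Qf η z (-ζ) = Qf η z ζ := by
    intro z ζ; simp only [Qf]; ring
  have hl2 : ∀ ζ : ℂ, ‖ζ‖ ≤ δ → Qf η (l₁ (-ζ)) ζ = 0 ∧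
      ‖l₁ (-ζ) - (-ζ + ((η^2/2:ℝ):ℂ)*ζ^3 - ((η^2/2:ℝ):ℂ)*ζ^4)‖ ≤ C*‖ζ‖^5 := by
    intro ζ h
    have h' : ‖-ζ‖ ≤ δ := by rw [norm_neg]; exact h
    obtain ⟨e1, e2⟩ := hl1 (-ζ) h'
    rw [hQeven] at e1
    refine ⟨e1, ?_⟩
    have etarg : (-ζ) - ((η^2/2:ℝ):ℂ)*(-ζ)^3 - ((η^2/2:ℝ):ℂ)*(-ζ)^4
        = -ζ + ((η^2/2:ℝ):ℂ)*ζ^3 - ((η^2/2:ℝ):ℂ)*ζ^4 := by ring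
    rw [norm_neg, etarg] at e2
    exact e2
  have hτC : (τ:ℂ)*(-(1/τ))+1 = 0 := by
    have : (τ:ℂ) ≠ 0 := Complex.ofReal_ne_zero.mpr hτ.ne'
    field_simp; ring
  have hl4root : ∀ ζ : ℂ, P (-(1/τ) : ℂ) ζ = 0 := by
    intro ζ
    rw [hPQ]
    push_cast
    rw [show ((τ:ℂ)*(-(1/(τ:ℂ)))+1) = 0 from by push_cast at hτC ⊢; exact hτC, zero_mul]
  -- real part facts
  have hIx : ∀ x : ℝ, ‖Complex.I * (x:ℂ)‖ = |x| := by
    intro x; simp [norm_mul, Complex.norm_real, Real.norm_eq_abs]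
  have habsre : ∀ (z : ℂ) (b : ℝ), ‖z‖ ≤ b → |z.re| ≤ b := fun z b h =>
    le_trans (by exact Complex.abs_re_le_norm z) h
  have hre1 : ∀ x : ℝ, ((Complex.I*(x:ℂ)) - ((η^2/2:ℝ):ℂ)*(Complex.I*x)^3
      - ((η^2/2:ℝ):ℂ)*(Complex.I*x)^4).re = -(η^2/2*x^4) := by
    intro x
    have e : (Complex.I*(x:ℂ)) - ((η^2/2:ℝ):ℂ)*(Complex.I*x)^3 - ((η^2/2:ℝ):ℂ)*(Complex.I*x)^4
        = ((-(η^2/2*x^4) : ℝ) : ℂ) + ((x + η^2/2*x^3 : ℝ):ℂ)*Complex.I := by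
      push_cast
      linear_combination (-((η:ℂ)^2/2*(x:ℂ)^3*Complex.I
        + (η:ℂ)^2/2*(x:ℂ)^4*(Complex.I^2-1))) * Complex.I_sq
    rw [e, Complex.add_re, Complex.ofReal_re, Complex.mul_re, Complex.ofReal_re,
      Complex.ofReal_im, Complex.I_re, Complex.I_im]
    ring
  have hre2 : ∀ x : ℝ, (-(Complex.I*(x:ℂ)) + ((η^2/2:ℝ):ℂ)*(Complex.I*x)^3
      - ((η^2/2:ℝ):ℂ)*(Complex.I*x)^4).re = -(η^2/2*x^4) := by
    intro x
    have e : -(Complex.I*(x:ℂ)) + ((η^2/2:ℝ):ℂ)*(Complex.I*x)^3 - ((η^2/2:ℝ):ℂ)*(Complex.I*x)^4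
        = ((-(η^2/2*x^4) : ℝ) : ℂ) + ((-(x + η^2/2*x^3) : ℝ):ℂ)*Complex.I := by
      push_cast
      linear_combination (((η:ℂ)^2/2*(x:ℂ)^3*Complex.I
        - (η:ℂ)^2/2*(x:ℂ)^4*(Complex.I^2-1))) * Complex.I_sq
    rw [e, Complex.add_re, Complex.ofReal_re, Complex.mul_re, Complex.ofReal_re,
      Complex.ofReal_im, Complex.I_re, Complex.I_im]
    ring
  have hre3 : ∀ x : ℝ, ((Complex.I*(x:ℂ))^2).re = -x^2 := by
    intro x
    have e : (Complex.I*(x:ℂ))^2 = ((-(x^2) : ℝ):ℂ) := by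
      push_cast
      linear_combination (x:ℂ)^2 * Complex.I_sq
    rw [e, Complex.ofReal_re]
  have hre4 : ((-(1/(τ:ℂ)))).re = -(1/τ) := by
    have e : (-(1/(τ:ℂ))) = ((-(1/τ) : ℝ):ℂ) := by push_cast; ring
    rw [e, Complex.ofReal_re]
  -- part 2 as a have (used twice)
  have part2 : ∀ x : ℝ, |x| ≤ δ →
      |(l₁ (Complex.I * x)).re + η ^ 2 / 2 * x ^ 4| ≤ C * |x| ^ 5 ∧
      |(l₁ (-(Complex.I * x))).re + η ^ 2 / 2 * x ^ 4| ≤ C * |x| ^ 5 ∧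
      |(l₃ (Complex.I * x)).re + x ^ 2| ≤ C * |x| ^ 3 := by
    intro x hx
    have hζδ : ‖Complex.I * (x:ℂ)‖ ≤ δ := by rw [hIx]; exact hx
    refine ⟨?_, ?_, ?_⟩
    · have hb := (hl1 (Complex.I*x) hζδ).2
      rw [hIx] at hb
      have e2 : (l₁ (Complex.I*x)).re + η^2/2*x^4
          = (l₁ (Complex.I*x) - ((Complex.I*(x:ℂ)) - ((η^2/2:ℝ):ℂ)*(Complex.I*x)^3
            - ((η^2/2:ℝ):ℂ)*(Complex.I*x)^4)).re := by
        rw [Complex.sub_re, hre1]; ring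
      rw [e2]
      exact habsre _ _ hb
    · have hb := (hl2 (Complex.I*x) hζδ).2
      rw [hIx] at hb
      have e2 : (l₁ (-(Complex.I*x))).re + η^2/2*x^4
          = (l₁ (-(Complex.I*x)) - (-(Complex.I*(x:ℂ)) + ((η^2/2:ℝ):ℂ)*(Complex.I*x)^3
            - ((η^2/2:ℝ):ℂ)*(Complex.I*x)^4)).re := by
        rw [Complex.sub_re, hre2]; ring
      rw [e2]
      exact habsre _ _ hb
    · have hb := (hl3 (Complex.I*x) hζδ).2
      rw [hIx] at hb
      have e2 : (l₃ (Complex.I*x)).re + x^2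
          = (l₃ (Complex.I*x) - (Complex.I*(x:ℂ))^2).re := by
        rw [Complex.sub_re, hre3]; ring
      rw [e2]
      exact habsre _ _ hb
  refine ⟨δ, hδ0, C, hC0, l₁, fun ζ => l₁ (-ζ), l₃, fun _ => (-(1/τ) : ℂ), ?_, ?_, ?_⟩
  · -- part 1
    intro ζ hζ
    refine ⟨⟨?_, ?_, ?_, hl4root ζ⟩, (hl1 ζ hζ).2, (hl2 ζ hζ).2, (hl3 ζ hζ).2, ?_⟩
    · rw [hPQ, (hl1 ζ hζ).1, mul_zero]
    · rw [hPQ, (hl2 ζ hζ).1, mul_zero]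
    · rw [hPQ, (hl3 ζ hζ).1, mul_zero]
    · simp only [sub_self, norm_zero]
      positivity
  · -- part 2
    intro x hx
    obtain ⟨b1, b2, b3⟩ := part2 x hx
    refine ⟨b1, b2, b3, ?_⟩
    simp only [hre4]
    rw [show -(1/τ) + 1/τ = 0 by ring, abs_zero]
    positivity
  · -- part 3
    refine ⟨min δ (min (η^2/(4*C)) (1/(2*C))), lt_min hδ0 (lt_min (by positivity) (by positivity)), ?_⟩
    intro x hx0 hxδ'
    have hxδ : |x| ≤ δ := hxδ'.trans (min_le_left _ _)
    have hxa : |x| ≤ η^2/(4*C) := hxδ'.trans ((min_le_right _ _).trans (min_le_left _ _))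
    have hxb : |x| ≤ 1/(2*C) := hxδ'.trans ((min_le_right _ _).trans (min_le_right _ _))
    obtain ⟨b1, b2, b3⟩ := part2 x hxδ
    have hxne : x ≠ 0 := by intro h; rw [h, abs_zero] at hx0; exact lt_irrefl 0 hx0
    have h2 : |x|^2 = x^2 := sq_abs x
    have h4 : |x|^4 = x^4 := by
      rw [show (4:ℕ) = 2*2 from rfl, pow_mul, pow_mul, h2]
    have h5 : |x|^5 = x^4*|x| := by
      rw [show (5:ℕ) = 4+1 from rfl, pow_succ, h4]
    have h3' : |x|^3 = x^2*|x| := by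
      rw [show (3:ℕ) = 2+1 from rfl, pow_succ, h2]
    have hx4 : 0 < x^4 := by rw [← h4]; exact pow_pos hx0 4
    have hx2 : 0 < x^2 := by rw [← h2]; exact pow_pos hx0 2
    have hCa : C*|x| ≤ η^2/4 := by
      have := mul_le_mul_of_nonneg_left hxa hC0.le
      have e : C*(η^2/(4*C)) = η^2/4 := by field_simp
      linarith
    have hCb : C*|x| ≤ 1/2 := by
      have := mul_le_mul_of_nonneg_left hxb hC0.le
      have e : C*(1/(2*C)) = 1/2 := by field_simp
      linarith
    refine ⟨?_, ?_, ?_, ?_⟩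
    · have hb := (abs_le.mp b1).2
      rw [h5] at hb
      have m1 : C*(x^4*|x|) = (C*|x|)*x^4 := by ring
      have m2 : (C*|x|)*x^4 ≤ (η^2/4)*x^4 := mul_le_mul_of_nonneg_right hCa hx4.le
      have m3 : 0 < η^2/4*x^4 := by positivity
      linarith [hb, m1, m2, m3]
    · have hb := (abs_le.mp b2).2
      rw [h5] at hb
      have m1 : C*(x^4*|x|) = (C*|x|)*x^4 := by ring
      have m2 : (C*|x|)*x^4 ≤ (η^2/4)*x^4 := mul_le_mul_of_nonneg_right hCa hx4.le
      have m3 : 0 < η^2/4*x^4 := by positivity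
      linarith [hb, m1, m2, m3]
    · have hb := (abs_le.mp b3).2
      rw [h3'] at hb
      have m1 : C*(x^2*|x|) = (C*|x|)*x^2 := by ring
      have m2 : (C*|x|)*x^2 ≤ (1/2)*x^2 := mul_le_mul_of_nonneg_right hCb hx2.le
      have m4 : 0 < (1:ℝ)/2*x^2 := by positivity
      nlinarith [hb, m1, m2, hx2, m4]
    · rw [hre4]
      simp only [neg_neg, Left.neg_neg_iff]
      positivity
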